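/- Let A be a ring, Σ a complex of projective A-modules concentrated in degrees -n,...,0, and D_Σ the class of modules X with Hom_{D(A)}(Σ, X[i]) = 0 for all i > 0. If a module M admits an exact sequence C_{n-1} → ... → C_0 → M → 0 with each C_j ∈ D_Σ, then M ∈ D_Σ. That is, Pres^{n-1}(D_Σ) ⊆ D_Σ. -/

import Mathlib

open CategoryTheory Limits DerivedCategory

universe u'

namespace Stmt2Aux

universe v'' w''

variable {C : Type w''} [Category.{v''} C] [Abelian C]

lemma XIsoOfEq_hom_comp_d (K : HomologicalComplex C (ComplexShape.up ℤ)) {p q : ℤ} (h : p = q)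
    (r : ℤ) : (K.XIsoOfEq h).hom ≫ K.d q r = K.d p r := by subst h; simp

variable (S Z : CochainComplex C ℤ) (u : S ⟶ Z)

section Step

variable (hSp : ∀ i : ℤ, Projective (S.X i)) (hZ : ∀ i : ℤ, Z.ExactAt i)
variable (i : ℤ) (pf : S.X (i + 1) ⟶ Z.X (i + 1 - 1)) (pg : S.X (i + 1 + 1) ⟶ Z.X (i + 1))
variable (hcomm : u.f (i + 1) = S.d (i + 1) (i + 1 + 1) ≫ pg + pf ≫ Z.d (i + 1 - 1) (i + 1))

include hcomm in
lemma step_aux : (u.f i - S.d i (i + 1) ≫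
    (pf ≫ (Z.XIsoOfEq (show i + 1 - 1 = i by omega)).hom)) ≫ (Z.sc' (i - 1) i (i + 1)).g = 0 := by
  have e1 : (Z.XIsoOfEq (show i + 1 - 1 = i by omega)).hom ≫ Z.d i (i + 1) =
      Z.d (i + 1 - 1) (i + 1) := XIsoOfEq_hom_comp_d Z _ _
  have e2 : u.f (i + 1) - pf ≫ Z.d (i + 1 - 1) (i + 1) = S.d (i + 1) (i + 1 + 1) ≫ pg := by
    rw [hcomm]; abel
  show (u.f i - S.d i (i + 1) ≫ (pf ≫ (Z.XIsoOfEq _).hom)) ≫ Z.d i (i + 1) = 0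
  simp only [Preadditive.sub_comp, Category.assoc, e1]
  rw [u.comm i (i + 1), ← Preadditive.comp_sub, e2]
  simp

/-- One step of the construction of the null homotopy. -/
noncomputable def stepF : S.X i ⟶ Z.X (i - 1) :=
  have : Projective (S.X i) := hSp i
  have hex : (Z.sc' (i - 1) i (i + 1)).Exact := by
    rw [← HomologicalComplex.exactAt_iff' Z (i - 1) i (i + 1)
      ((ComplexShape.up ℤ).prev_eq' (by rw [ComplexShape.up_Rel]; omega))
      ((ComplexShape.up ℤ).next_eq' (by rw [ComplexShape.up_Rel]))]
    exact hZ i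
  have : Epi (Z.sc' (i - 1) i (i + 1)).toCycles := hex.epi_toCycles
  @Projective.factorThru _ _ _ _ _ (hSp i)
    ((Z.sc' (i - 1) i (i + 1)).liftCycles _ (step_aux S Z u i pf pg hcomm))
    (Z.sc' (i - 1) i (i + 1)).toCycles hex.epi_toCycles

include hcomm in
lemma stepF_d : stepF S Z u hSp hZ i pf pg hcomm ≫ Z.d (i - 1) i =
    u.f i - S.d i (i + 1) ≫ (pf ≫ (Z.XIsoOfEq (show i + 1 - 1 = i by omega)).hom) := by
  have hex : (Z.sc' (i - 1) i (i + 1)).Exact := by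
    rw [← HomologicalComplex.exactAt_iff' Z (i - 1) i (i + 1)
      ((ComplexShape.up ℤ).prev_eq' (by rw [ComplexShape.up_Rel]; omega))
      ((ComplexShape.up ℤ).next_eq' (by rw [ComplexShape.up_Rel]))]
    exact hZ i
  have : Epi (Z.sc' (i - 1) i (i + 1)).toCycles := hex.epi_toCycles
  have : Projective (S.X i) := hSp i
  have h := congrArg (fun q => q ≫ (Z.sc' (i - 1) i (i + 1)).iCycles)
    (Projective.factorThru_comp
      ((Z.sc' (i - 1) i (i + 1)).liftCycles _ (step_aux S Z u i pf pg hcomm))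
      (Z.sc' (i - 1) i (i + 1)).toCycles)
  rw [Category.assoc, (Z.sc' (i - 1) i (i + 1)).toCycles_i] at h
  exact h.trans ((Z.sc' (i - 1) i (i + 1)).liftCycles_i _ _)

end Step

variable (hS0 : ∀ i : ℤ, 0 < i → IsZero (S.X i)) (hSp : ∀ i : ℤ, Projective (S.X i))
variable (hZ : ∀ i : ℤ, Z.ExactAt i)

/-- The sigma type carrying homotopy data at degree `i`. -/
abbrev HData (i : ℤ) : Type _ :=
  Σ' (f : S.X i ⟶ Z.X (i - 1)) (g : S.X (i + 1) ⟶ Z.X i),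
    u.f i = S.d i (i + 1) ≫ g + f ≫ Z.d (i - 1) i

/-- The homotopy data, defined by descending recursion. -/
noncomputable def hh : ∀ i : ℤ, HData S Z u i := fun i =>
  if hi : 0 < i then
    ⟨0, 0, by
      rw [comp_zero, zero_comp, add_zero]
      exact (hS0 i hi).eq_of_src _ _⟩
  else
    ⟨stepF S Z u hSp hZ i (hh (i + 1)).1 (hh (i + 1)).2.1 (hh (i + 1)).2.2,
     (hh (i + 1)).1 ≫ (Z.XIsoOfEq (show i + 1 - 1 = i by omega)).hom, by
      rw [stepF_d S Z u hSp hZ i (hh (i + 1)).1 (hh (i + 1)).2.1 (hh (i + 1)).2.2]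
      abel⟩
  termination_by i => (1 - i).toNat
  decreasing_by omega

lemma hh_fst_of_pos (i : ℤ) (hi : 0 < i) : (hh S Z u hS0 hSp hZ i).1 = 0 := by
  rw [hh, dif_pos hi]

lemma hh_coh (i : ℤ) : (hh S Z u hS0 hSp hZ i).2.1 =
    (hh S Z u hS0 hSp hZ (i + 1)).1 ≫ (Z.XIsoOfEq (show i + 1 - 1 = i by omega)).hom := by
  conv_lhs => rw [hh]
  by_cases hi : 0 < i
  · rw [dif_pos hi]
    symm
    rw [hh_fst_of_pos S Z u hS0 hSp hZ (i + 1) (by omega)]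
    exact zero_comp.trans rfl
  · rw [dif_neg hi]

/-- The components of the null homotopy. -/
noncomputable def hfun (i j : ℤ) : S.X i ⟶ Z.X j :=
  if h : j + 1 = i then
    (hh S Z u hS0 hSp hZ i).1 ≫ (Z.XIsoOfEq (show i - 1 = j by omega)).hom
  else 0

lemma hfun_eq (i j : ℤ) (h : j + 1 = i) : hfun S Z u hS0 hSp hZ i j =
    (hh S Z u hS0 hSp hZ i).1 ≫ (Z.XIsoOfEq (show i - 1 = j by omega)).hom := dif_pos h

/-- The null homotopy. -/
noncomputable def nullHomotopy : Homotopy u 0 where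
  hom := hfun S Z u hS0 hSp hZ
  zero i j hij := dif_neg (by simpa using hij)
  comm i := by
    rw [dNext_eq _ (show (ComplexShape.up ℤ).Rel i (i + 1) by rw [ComplexShape.up_Rel]),
      prevD_eq _ (show (ComplexShape.up ℤ).Rel (i - 1) i by rw [ComplexShape.up_Rel]; omega)]
    rw [hfun_eq S Z u hS0 hSp hZ (i + 1) i rfl, hfun_eq S Z u hS0 hSp hZ i (i - 1) (by omega)]
    have h1 : (Z.XIsoOfEq (show i - 1 = i - 1 by omega)).hom = 𝟙 _ := by simp
    rw [h1, Category.comp_id, ← hh_coh S Z u hS0 hSp hZ i]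
    simpa using (hh S Z u hS0 hSp hZ i).2.2

lemma quotient_map_eq_zero (hS0 : ∀ i : ℤ, 0 < i → IsZero (S.X i))
    (hSp : ∀ i : ℤ, Projective (S.X i)) (hZ : ∀ i : ℤ, Z.ExactAt i) :
    (HomotopyCategory.quotient C (ComplexShape.up ℤ)).map u = 0 :=
  calc (HomotopyCategory.quotient C (ComplexShape.up ℤ)).map u
      = (HomotopyCategory.quotient C (ComplexShape.up ℤ)).map 0 :=
        HomotopyCategory.eq_of_homotopy _ _ (nullHomotopy S Z u hS0 hSp hZ)
    _ = 0 := Functor.map_zero _ _ _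

section Derived

variable [HasDerivedCategory C]

omit [HasDerivedCategory C] in
lemma homK_ext_zero (S T : CochainComplex C ℤ)
    (h : ∀ j : ℤ, IsZero (S.X j) ∨ IsZero (T.X j))
    (g : (HomotopyCategory.quotient C (ComplexShape.up ℤ)).obj S ⟶
      (HomotopyCategory.quotient C (ComplexShape.up ℤ)).obj T) : g = 0 := by
  obtain ⟨u, rfl⟩ := (HomotopyCategory.quotient C (ComplexShape.up ℤ)).map_surjective g
  have hu : u = 0 := by
    ext j
    rcases h j with h' | h'
    · exact h'.eq_of_src _ _
    · exact h'.eq_of_tgt _ _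
  rw [hu, Functor.map_zero]

lemma exists_Qh_preimage (S T : CochainComplex C ℤ)
    (hS0 : ∀ i : ℤ, 0 < i → IsZero (S.X i)) (hSp : ∀ i : ℤ, Projective (S.X i))
    (φ : Qh.obj ((HomotopyCategory.quotient C (ComplexShape.up ℤ)).obj S) ⟶
      Qh.obj ((HomotopyCategory.quotient C (ComplexShape.up ℤ)).obj T)) :
    ∃ g, φ = Qh.map g := by
  obtain ⟨fr, hfr⟩ := Localization.exists_leftFraction Qh
    (HomotopyCategory.subcategoryAcyclic C).trW φ
  obtain ⟨Y', ff, s, hs, rfl⟩ := fr.cases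
  obtain ⟨Zc, gmap, hmap, hdist, hZ⟩ := hs
  have hz : ff ≫ gmap = 0 := by
    obtain ⟨w, hw⟩ := (HomotopyCategory.quotient C (ComplexShape.up ℤ)).map_surjective
      (X := S) (Y := Zc.as) (ff ≫ gmap)
    have hac : ∀ i : ℤ, Zc.as.ExactAt i := by
      rw [← HomotopyCategory.quotient_obj_mem_subcategoryAcyclic_iff_exactAt]
      exact hZ
    exact hw.symm.trans (quotient_map_eq_zero S Zc.as w hS0 hSp hac)
  obtain ⟨g, hg⟩ := Pretriangulated.Triangle.coyoneda_exact₂ _ hdist ff hz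
  refine ⟨g, ?_⟩
  have hiso : IsIso (Qh.map s) :=
    Localization.inverts Qh (HomotopyCategory.subcategoryAcyclic C).trW s ⟨Zc, gmap, hmap, hdist, hZ⟩
  have h1 := MorphismProperty.LeftFraction.map_comp_map_s
    (MorphismProperty.LeftFraction.mk ff s ⟨Zc, gmap, hmap, hdist, hZ⟩) Qh
    (Localization.inverts Qh (HomotopyCategory.subcategoryAcyclic C).trW)
  refine (cancel_mono (Qh.map s)).1 ?_
  calc φ ≫ Qh.map s = Qh.map ff := by rw [hfr]; exact h1
    _ = Qh.map (g ≫ s) := by rw [hg]; rfl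
    _ = Qh.map g ≫ Qh.map s := Qh.map_comp _ _

/-- Base case : all maps `Q.obj S ⟶ ((singleFunctor C 0).obj X)⟦i⟧` vanish when `S` is zero
in degree `-i`. -/
lemma hom_single_shift_zero (S : CochainComplex C ℤ)
    (hS0 : ∀ i : ℤ, 0 < i → IsZero (S.X i)) (hSp : ∀ i : ℤ, Projective (S.X i))
    (X : C) (i : ℤ) (hzero : IsZero (S.X (-i)))
    (φ : Q.obj S ⟶ ((singleFunctor C 0).obj X)⟦i⟧) : φ = 0 := by
  set sX : CochainComplex C ℤ := (HomologicalComplex.single C (ComplexShape.up ℤ) 0).obj X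
    with hsX
  set T : CochainComplex C ℤ := (CategoryTheory.shiftFunctor (CochainComplex C ℤ) i).obj sX
    with hT
  have e0 : Qh.obj ((HomotopyCategory.quotient C (ComplexShape.up ℤ)).obj S) ≅ Q.obj S :=
    (quotientCompQhIso C).app S
  have a1 : (singleFunctor C 0).obj X ≅ Q.obj sX :=
    ((SingleFunctors.evaluation _ _ 0).mapIso (singleFunctorsPostcompQIso C)).app X
  have a2 : ((singleFunctor C 0).obj X)⟦i⟧ ≅ (Q.obj sX)⟦i⟧ :=
    (CategoryTheory.shiftFunctor (DerivedCategory C) i).mapIso a1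
  have a3 : Q.obj T ≅ (Q.obj sX)⟦i⟧ := (Q.commShiftIso i).app sX
  have a4 : Qh.obj ((HomotopyCategory.quotient C (ComplexShape.up ℤ)).obj T) ≅ Q.obj T :=
    (quotientCompQhIso C).app T
  obtain ⟨g, hg⟩ := exists_Qh_preimage S T hS0 hSp
    (e0.hom ≫ φ ≫ a2.hom ≫ a3.inv ≫ a4.inv)
  have hdeg : ∀ j : ℤ, IsZero (S.X j) ∨ IsZero (T.X j) := by
    intro j
    by_cases hj : j = -i
    · subst hj; exact Or.inl hzero
    · refine Or.inr ?_
      exact (HomologicalComplex.isZero_single_obj_X (ComplexShape.up ℤ) 0 X (j + i) (by omega))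
  rw [homK_ext_zero S T hdeg g, Functor.map_zero] at hg
  have : φ = e0.inv ≫ (e0.hom ≫ φ ≫ a2.hom ≫ a3.inv ≫ a4.inv) ≫ a4.hom ≫ a3.hom ≫ a2.inv := by
    simp
  rw [this, hg]
  simp



lemma good_step (S : CochainComplex C ℤ) (SC : ShortComplex C) (hSC : SC.ShortExact)
    (h2 : ∀ i : ℤ, 0 < i → ∀ φ : Q.obj S ⟶ ((singleFunctor C 0).obj SC.X₂)⟦i⟧, φ = 0)
    (i : ℤ)
    (h1 : ∀ ψ : Q.obj S ⟶ ((singleFunctor C 0).obj SC.X₁)⟦i + 1⟧, ψ = 0)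
    (hi : 0 < i)
    (φ : Q.obj S ⟶ ((singleFunctor C 0).obj SC.X₃)⟦i⟧) : φ = 0 := by
  have hT := hSC.singleTriangle_distinguished
  have hT' : (CategoryTheory.shiftFunctor
      (Pretriangulated.Triangle (DerivedCategory C)) i).obj hSC.singleTriangle ∈
      Pretriangulated.distinguishedTriangles :=
    Pretriangulated.Triangle.shift_distinguished _ hT i
  set T' := (CategoryTheory.shiftFunctor
      (Pretriangulated.Triangle (DerivedCategory C)) i).obj hSC.singleTriangle with hT'def
  have h3 : φ ≫ T'.mor₃ = 0 := by
    have hz : ∀ ψ' : Q.obj S ⟶ (T'.obj₁)⟦(1 : ℤ)⟧, ψ' = 0 := by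
      intro ψ'
      have e : ((T'.obj₁)⟦(1 : ℤ)⟧ : DerivedCategory C) ≅
          ((singleFunctor C 0).obj SC.X₁)⟦i + 1⟧ :=
        ((shiftFunctorAdd' (DerivedCategory C) i 1 (i + 1) rfl).symm.app _)
      have : ψ' = (ψ' ≫ e.hom) ≫ e.inv := by simp
      rw [this, h1 (ψ' ≫ e.hom), zero_comp]
    exact hz (φ ≫ T'.mor₃)
  obtain ⟨g, hgg⟩ := Pretriangulated.Triangle.coyoneda_exact₃ _ hT' φ h3
  rw [hgg, h2 i hi g]
  exact zero_comp


end Derived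

section ModuleCatAux

variable {A : Type u'} [Ring A]

/-- The short exact sequence `0 → ker u → P → ker v → 0` attached to an exact pair. -/
noncomputable def kerSES {P Q R : ModuleCat.{u'} A} (u : P →ₗ[A] Q) (v : Q →ₗ[A] R)
    (huv : Function.Exact u v) : ShortComplex (ModuleCat.{u'} A) :=
  ShortComplex.mk
    (ModuleCat.ofHom (LinearMap.ker u).subtype)
    (ModuleCat.ofHom (u.codRestrict (LinearMap.ker v) (fun x => huv.apply_apply_eq_zero x)))
    (by
      ext x
      exact x.2)

lemma kerSES_shortExact {P Q R : ModuleCat.{u'} A} (u : P →ₗ[A] Q) (v : Q →ₗ[A] R)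
    (huv : Function.Exact u v) : (kerSES u v huv).ShortExact := by
  refine { exact := ?_, mono_f := ?_, epi_g := ?_ }
  · rw [ShortComplex.moduleCat_exact_iff]
    intro x₂ hx₂
    have : u x₂ = 0 := congrArg Subtype.val hx₂
    exact ⟨⟨x₂, this⟩, rfl⟩
  · rw [ModuleCat.mono_iff_injective]
    exact Subtype.val_injective
  · rw [ModuleCat.epi_iff_surjective]
    rintro ⟨y, hy⟩
    obtain ⟨x, hx⟩ := (huv y).1 hy
    exact ⟨x, Subtype.ext hx⟩

/-- The short exact sequence `0 → ker e → P → M → 0` attached to a surjection. -/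
noncomputable def surjSES {P M : ModuleCat.{u'} A} (e : P →ₗ[A] M) : ShortComplex (ModuleCat.{u'} A) :=
  ShortComplex.mk (ModuleCat.ofHom (LinearMap.ker e).subtype) (ModuleCat.ofHom e)
    (by ext x; exact x.2)

lemma surjSES_shortExact {P M : ModuleCat.{u'} A} (e : P →ₗ[A] M)
    (he : Function.Surjective e) : (surjSES e).ShortExact := by
  refine { exact := ?_, mono_f := ?_, epi_g := ?_ }
  · rw [ShortComplex.moduleCat_exact_iff]
    intro x₂ hx₂
    exact ⟨⟨x₂, hx₂⟩, rfl⟩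
  · rw [ModuleCat.mono_iff_injective]
    exact Subtype.val_injective
  · rw [ModuleCat.epi_iff_surjective]
    exact he

end ModuleCatAux

end Stmt2Aux

universe u

open Stmt2Aux in
/-- Let `S` be a complex of projective `A`-modules concentrated in degrees
`-n,...,0` and `D_S = {X | Hom_{D(A)}(S, X[i]) = 0 ∀ i > 0}`. If a module `M` admits an
exact sequence `C_{n-1} → ... → C_0 → M → 0` with each `C_j ∈ D_S`, then `M ∈ D_S`,
i.e. `Pres^{n-1}(D_S) ⊆ D_S`. -/
theorem stmt2 {A : Type u} [Ring A] [HasDerivedCategory.{u} (ModuleCat.{u} A)]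
    (n : ℕ) (hn : 0 < n) (S : CochainComplex (ModuleCat.{u} A) ℤ)
    (hSb : ∀ i : ℤ, (i < -(n : ℤ) ∨ 0 < i) → IsZero (S.X i))
    (hSp : ∀ i : ℤ, Projective (S.X i))
    (M : ModuleCat.{u} A)
    (hM : ∃ (C : ℕ → ModuleCat.{u} A)
        (d : ∀ j : ℕ, C (j + 1) →ₗ[A] C j) (e : C 0 →ₗ[A] M),
      (∀ j < n, ∀ i : ℤ, 0 < i →
          ∀ φ : Q.obj S ⟶ ((singleFunctor (ModuleCat.{u} A) 0).obj (C j))⟦i⟧, φ = 0) ∧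
      Function.Surjective e ∧ (2 ≤ n → Function.Exact (d 0) e) ∧
      (∀ j : ℕ, j + 3 ≤ n → Function.Exact (d (j + 1)) (d j))) :
    ∀ i : ℤ, 0 < i →
      ∀ φ : Q.obj S ⟶ ((singleFunctor (ModuleCat.{u} A) 0).obj M)⟦i⟧, φ = 0 := by
  intro i hi0 φ
  obtain ⟨Cc, d, e, hD, hsurj, hex0, hexs⟩ := hM
  have hS0 : ∀ j : ℤ, 0 < j → IsZero (S.X j) := fun j hj => hSb j (Or.inr hj)
  let X : ℕ → ModuleCat.{u} A := fun m => match m with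
    | 0 => M
    | 1 => ModuleCat.of A (LinearMap.ker e)
    | (m + 2) => ModuleCat.of A (LinearMap.ker (d m))
  have key : ∀ k m : ℕ, m + k = n → ∀ i : ℤ, (m : ℤ) < i → 0 < i →
      ∀ φ : Q.obj S ⟶ ((singleFunctor (ModuleCat.{u} A) 0).obj (X m))⟦i⟧, φ = 0 := by
    intro k
    induction k with
    | zero =>
      intro m hm i hi hi0 φ
      exact hom_single_shift_zero S hS0 hSp (X m) i (hSb (-i) (Or.inl (by omega))) φ
    | succ k ih =>
      intro m hm i hi hi0 φ
      rcases m with _ | mm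
      · exact good_step S (surjSES e) (surjSES_shortExact e hsurj)
          (fun i hi φ => hD 0 (by omega) i hi φ) i
          (fun ψ => ih 1 (by omega) (i + 1) (by push_cast; omega) (by omega) ψ) hi0 φ
      · rcases mm with _ | kk
        · exact good_step S (kerSES (d 0) e (hex0 (by omega))) (kerSES_shortExact _ _ _)
            (fun i hi φ => hD 1 (by omega) i hi φ) i
            (fun ψ => ih 2 (by omega) (i + 1) (by push_cast; omega) (by omega) ψ) hi0 φ
        · exact good_step S (kerSES (d (kk + 1)) (d kk) (hexs kk (by omega)))
            (kerSES_shortExact _ _ _)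
            (fun i hi φ => hD (kk + 2) (by omega) i hi φ) i
            (fun ψ => ih (kk + 3) (by omega) (i + 1) (by push_cast; omega) (by omega) ψ) hi0 φ
  exact key n 0 (by omega) i (by exact_mod_cast hi0) hi0 φ
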